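/- Let η be the linear order of finitely supported functions ω → ω₁ ordered lexicographically (f < g iff f(n) < g(n) at the least point of difference). For every natural number n ≥ 1, the lexicographic product η × n (n consecutive copies of η) is order-isomorphic to η. -/

import Mathlib

open Cardinal

noncomputable section

/-- ω₁ as an ordinal. -/
abbrev om1 : Ordinal := (Cardinal.aleph 1).ord

/-- The countable ordinals, i.e. ordinals `< ω₁`, as a linearly ordered type. -/
abbrev O1 : Type 1 := {o : Ordinal // o < om1}

instance : Zero O1 := ⟨⟨0, by rw [Cardinal.lt_ord]; simpa using Cardinal.aleph_pos 1⟩⟩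

/-- η : the finitely supported functions ω → ω₁, ordered lexicographically:
`f < g` iff `f n < g n` at the least `n` where `f` and `g` differ. -/
abbrev Eta : Type 1 := Lex (ℕ →₀ O1)

namespace EtaAbsorb

/-- `a ↦ 1 + a` on countable ordinals. -/
def oneAdd (a : O1) : O1 :=
  ⟨1 + a.1, by
    have h := a.2
    rw [Cardinal.lt_ord] at h ⊢
    rw [Ordinal.card_add, Ordinal.card_one]
    exact Cardinal.add_lt_of_lt (aleph0_le_aleph 1)
      (lt_of_lt_of_le one_lt_aleph0 (aleph0_le_aleph 1)) h⟩

lemma oneAdd_lt_oneAdd {a b : O1} (h : a < b) : oneAdd a < oneAdd b := by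
  simpa [oneAdd, Subtype.mk_lt_mk, add_lt_add_iff_left] using h

lemma oneAdd_pos (a : O1) : 0 < oneAdd a := by
  have : (0 : Ordinal) < 1 + a.1 :=
    lt_of_lt_of_le zero_lt_one (le_self_add (a := (1:Ordinal)) (b := a.1))
  exact this

/-- predecessor (ordinal subtraction of 1). -/
def predO (b : O1) : O1 :=
  ⟨b.1 - 1, lt_of_le_of_lt (Ordinal.sub_le_self b.1 1) b.2⟩

lemma oneAdd_predO {b : O1} (hb : b ≠ 0) : oneAdd (predO b) = b := by
  apply Subtype.ext
  have hb1 : (1 : Ordinal) ≤ b.1 := by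
    rw [Ordinal.one_le_iff_ne_zero]
    intro h
    exact hb (Subtype.ext h)
  exact Ordinal.add_sub_cancel_of_le hb1

/-- The embedding `i ↦ j + i` of `ℕ` into itself. -/
def emb (j : ℕ) : ℕ ↪ ℕ := ⟨fun i => j + i, add_right_injective j⟩

lemma emb_range {j d : ℕ} (h : j ≤ d) : d ∈ Set.range (emb j) :=
  ⟨d - j, by simp [emb]; omega⟩

lemma embD_lt (j : ℕ) (f : ℕ →₀ O1) {d : ℕ} (hd : d < j) :
    Finsupp.embDomain (emb j) f d = 0 := by
  apply Finsupp.embDomain_notin_range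
  rintro ⟨i, hi⟩
  simp [emb] at hi
  omega

lemma embD_add (j i : ℕ) (f : ℕ →₀ O1) :
    Finsupp.embDomain (emb j) f (j + i) = f i :=
  Finsupp.embDomain_apply_self (emb j) f i

/-- Key monotonicity lemma for shifted Finsupps. -/
lemma embD_lt_embD {j m : ℕ} {u v : ℕ →₀ O1}
    (h1 : ∀ d < m, u d = v d) (h2 : u m < v m) :
    toLex (Finsupp.embDomain (emb j) u) < toLex (Finsupp.embDomain (emb j) v) := by
  refine Finsupp.Lex.lt_iff.mpr ⟨j + m, ?_, ?_⟩
  · intro d hd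
    show Finsupp.embDomain (emb j) u d = Finsupp.embDomain (emb j) v d
    by_cases hdj : d < j
    · rw [embD_lt j u hdj, embD_lt j v hdj]
    · have : d = j + (d - j) := by omega
      rw [this, embD_add, embD_add]
      exact h1 (d - j) (by omega)
  · show Finsupp.embDomain (emb j) u (j + m) < Finsupp.embDomain (emb j) v (j + m)
    rw [embD_add, embD_add]
    exact h2

/-- Modify `f` at position 0 (marking non-initial copies). -/
def upd (k : ℕ) (f : ℕ →₀ O1) : ℕ →₀ O1 :=
  if k = 0 then f else f.update 0 (oneAdd (f 0))

/-- The isomorphism on raw data: copy `k` of `η` gets sent into the block of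
elements of `η` whose first nonzero position is `n - 1 - k`. -/
def phi0 (n k : ℕ) (f : ℕ →₀ O1) : ℕ →₀ O1 :=
  Finsupp.embDomain (emb (n - 1 - k)) (upd k f)

lemma upd_lt {k m : ℕ} {f g : ℕ →₀ O1}
    (h1 : ∀ d < m, f d = g d) (h2 : f m < g m) :
    (∀ d < m, upd k f d = upd k g d) ∧ upd k f m < upd k g m := by
  unfold upd
  by_cases hk : k = 0
  · simp only [hk, if_pos]
    exact ⟨h1, h2⟩
  · simp only [hk, if_neg, not_false_iff]
    constructor
    · intro d hd
      rw [Finsupp.coe_update, Finsupp.coe_update]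
      by_cases hd0 : d = 0
      · subst hd0
        simp [Function.update_self, h1 0 hd]
      · simp [Function.update_of_ne hd0, h1 d hd]
    · rw [Finsupp.coe_update, Finsupp.coe_update]
      by_cases hm0 : m = 0
      · subst hm0
        simpa [Function.update_self] using oneAdd_lt_oneAdd h2
      · simpa [Function.update_of_ne hm0] using h2

lemma upd_ne_zero_at_zero {k : ℕ} (hk : k ≠ 0) (f : ℕ →₀ O1) :
    0 < upd k f 0 := by
  unfold upd
  simp only [hk, if_neg, not_false_iff]
  rw [Finsupp.coe_update]
  simpa [Function.update_self] using oneAdd_pos (f 0)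

lemma phi0_strictMono_same {n k : ℕ} {f g : ℕ →₀ O1}
    (h : toLex f < toLex g) : toLex (phi0 n k f) < toLex (phi0 n k g) := by
  obtain ⟨m, h1, h2⟩ := Finsupp.lex_def.mp h
  obtain ⟨h1', h2'⟩ := upd_lt (k := k) (fun d hd => h1 d hd) h2
  exact embD_lt_embD h1' h2'

lemma phi0_strictMono_lt {n k k' : ℕ} (hk : k < k') (hk' : k' < n)
    (f g : ℕ →₀ O1) : toLex (phi0 n k f) < toLex (phi0 n k' g) := by
  have hjj : n - 1 - k' < n - 1 - k := by omega
  refine Finsupp.Lex.lt_iff.mpr ⟨n - 1 - k', ?_, ?_⟩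
  · intro d hd
    show phi0 n k f d = phi0 n k' g d
    rw [phi0, phi0, embD_lt _ _ (by omega), embD_lt _ _ hd]
  · show phi0 n k f (n - 1 - k') < phi0 n k' g (n - 1 - k')
    rw [phi0, phi0, embD_lt _ _ hjj]
    have h0 := embD_add (n - 1 - k') 0 (upd k' g)
    rw [Nat.add_zero] at h0
    rw [h0]
    exact upd_ne_zero_at_zero (by omega) g

lemma phi0_surjective {n : ℕ} (hn : 1 ≤ n) (g : ℕ →₀ O1) :
    ∃ k : Fin n, ∃ f : ℕ →₀ O1, phi0 n k.1 f = g := by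
  by_cases h : ∀ i < n - 1, g i = 0
  · refine ⟨⟨0, by omega⟩, Finsupp.comapDomain (emb (n - 1)) g (emb (n - 1)).injective.injOn, ?_⟩
    rw [phi0]
    simp only [Nat.sub_zero, upd, if_pos rfl]
    apply Finsupp.embDomain_comapDomain
    intro d hd
    have hd' : g d ≠ 0 := Finsupp.mem_support_iff.mp hd
    exact emb_range (by by_contra hc; exact hd' (h d (by omega)))
  · push_neg at h
    have hex : ∃ i, i < n - 1 ∧ g i ≠ 0 := h
    classical
    let j := Nat.find hex
    obtain ⟨hj1, hj2⟩ := Nat.find_spec hex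
    have hjmin : ∀ d < j, ¬(d < n - 1 ∧ g d ≠ 0) := fun d hd => Nat.find_min hex hd
    set u : ℕ →₀ O1 := Finsupp.comapDomain (emb j) g (emb j).injective.injOn with hu
    have hu0 : u 0 = g j := by
      rw [hu, Finsupp.comapDomain_apply]
      simp [emb]
    refine ⟨⟨n - 1 - j, by omega⟩, u.update 0 (predO (g j)), ?_⟩
    rw [phi0]
    have hnj : n - 1 - (n - 1 - j) = j := by omega
    rw [hnj]
    have hupd : upd (n - 1 - j) (u.update 0 (predO (g j))) = u := by
      rw [upd, if_neg (by omega)]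
      have h0 : (u.update 0 (predO (g j))) 0 = predO (g j) := by
        rw [Finsupp.coe_update]; simp [Function.update_self]
      rw [h0, oneAdd_predO hj2]
      ext a
      rw [Finsupp.coe_update, Finsupp.coe_update]
      by_cases ha : a = 0
      · subst ha; simp [Function.update_self, hu0]; rfl
      · simp [Function.update_of_ne ha]
    rw [hupd, hu]
    apply Finsupp.embDomain_comapDomain
    intro d hd
    have hd' : g d ≠ 0 := Finsupp.mem_support_iff.mp hd
    apply emb_range
    by_contra hc
    push_neg at hc
    exact (hjmin d hc) ⟨by omega, hd'⟩

/-- The full map. -/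
def phi (n : ℕ) (p : Lex (Fin n × Eta)) : Eta :=
  toLex (phi0 n (ofLex p).1.1 (ofLex (ofLex p).2))

lemma phi_strictMono (n : ℕ) : StrictMono (phi n) := by
  intro p q h
  rcases Prod.Lex.lt_iff.mp h with h1 | ⟨h1, h2⟩
  · exact phi0_strictMono_lt h1 (ofLex q).1.isLt _ _
  · have : (ofLex p).1.1 = (ofLex q).1.1 := by rw [h1]
    rw [phi, phi, this]
    exact phi0_strictMono_same h2

lemma phi_surjective (n : ℕ) (hn : 1 ≤ n) : Function.Surjective (phi n) := by
  intro g
  obtain ⟨k, f, hf⟩ := phi0_surjective hn (ofLex g)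
  exact ⟨toLex (k, toLex f), by simp only [phi, ofLex_toLex]; rw [hf]; rfl⟩

end EtaAbsorb

/-- For every `n ≥ 1`, the lexicographic product `η × n` (n consecutive copies of η,
ordered first by the index in `Fin n`, then inside the copies) is order-isomorphic to `η`. -/
theorem eta_mul_nat_orderIso (n : ℕ) (hn : 1 ≤ n) :
    Nonempty (Lex (Fin n × Eta) ≃o Eta) :=
  ⟨StrictMono.orderIsoOfSurjective (EtaAbsorb.phi n)
    (EtaAbsorb.phi_strictMono n) (EtaAbsorb.phi_surjective n hn)⟩
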